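/- Let A be an n×n matrix over a field with rows u,v agreeing outside columns u,v (u<v). If det(A) = 0, then for ALL indices w (including w ∈ {u,v}): (A_{u,u} − A_{v,u})·det(A^{w;u}) = (−1)^{u+v}(A_{v,v} − A_{u,v})·det(A^{w;v}). -/
import Mathlib


/-- If `det A = 0` and rows `u < v` of `A` agree outside columns `u, v`, then for
ALL `w` (including `w ∈ {u, v}`):
`(A u u − A v u)·det A^{w;u} = (−1)^{u+v}(A v v − A u v)·det A^{w;v}`. -/
theorem ratio_of_minors_all_rows_of_det_eq_zero {K : Type*} [Field K] {n : ℕ}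
    (A : Matrix (Fin (n + 1)) (Fin (n + 1)) K) (u v : Fin (n + 1)) (huv : u < v)
    (hrow : ∀ x, x ≠ u → x ≠ v → A u x = A v x) (hdet : A.det = 0) :
    ∀ w : Fin (n + 1), (A u u - A v u) * (A.submatrix w.succAbove u.succAbove).det
      = (-1 : K) ^ ((u : ℕ) + (v : ℕ)) * (A v v - A u v) *
        (A.submatrix w.succAbove v.succAbove).det := by
  intro w
  have hmul : A * A.adjugate = 0 := by
    rw [Matrix.mul_adjugate, hdet, zero_smul]
  have hsum : ∑ j, (A u j - A v j) * A.adjugate j w = 0 := by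
    have h1 : ∑ j, A u j * A.adjugate j w = 0 := by
      have := congrFun (congrFun hmul u) w
      simpa [Matrix.mul_apply] using this
    have h2 : ∑ j, A v j * A.adjugate j w = 0 := by
      have := congrFun (congrFun hmul v) w
      simpa [Matrix.mul_apply] using this
    simp [sub_mul, Finset.sum_sub_distrib, h1, h2]
  have hne : u ≠ v := ne_of_lt huv
  have hsub : ∑ j ∈ ({u, v} : Finset (Fin (n + 1))),
      (A u j - A v j) * A.adjugate j w = ∑ j, (A u j - A v j) * A.adjugate j w :=
    Finset.sum_subset (Finset.subset_univ _) (fun j _ hj => by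
      simp only [Finset.mem_insert, Finset.mem_singleton, not_or] at hj
      rw [hrow j hj.1 hj.2, sub_self, zero_mul])
  have hkey : (A u u - A v u) * A.adjugate u w + (A u v - A v v) * A.adjugate v w = 0 := by
    rw [Finset.sum_pair hne] at hsub
    exact hsub.trans hsum
  rw [Matrix.adjugate_fin_succ_eq_det_submatrix, Matrix.adjugate_fin_succ_eq_det_submatrix] at hkey
  have hsign : ((-1 : K) ^ ((w : ℕ) + (u : ℕ))) * ((-1 : K) ^ ((w : ℕ) + (u : ℕ))) = 1 := by
    rw [← pow_add]
    exact Even.neg_one_pow ⟨(w : ℕ) + (u : ℕ), by ring⟩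
  have expand : (-1 : K) ^ ((w : ℕ) + (u : ℕ)) * ((-1 : K) ^ ((w : ℕ) + (v : ℕ)))
      = (-1 : K) ^ ((u : ℕ) + (v : ℕ)) := by
    rw [← pow_add, show (w : ℕ) + (u : ℕ) + ((w : ℕ) + (v : ℕ))
      = 2 * (w : ℕ) + ((u : ℕ) + (v : ℕ)) from by ring, pow_add, pow_mul]
    simp
  linear_combination ((-1 : K) ^ ((w : ℕ) + (u : ℕ))) * hkey
    - (A u u - A v u) * (A.submatrix w.succAbove u.succAbove).det * hsign
    + (A v v - A u v) * (A.submatrix w.succAbove v.succAbove).det * expand
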